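/- Let H be a complex Hilbert space and T ∈ B(H) a positive operator. Then for every x ∈ H, the sequence n ↦ (T + (1/n)·1)⁻¹(T x) converges in norm (as n → ∞) to the orthogonal projection of x onto the closure of range T. -/

import Mathlib

open ContinuousLinearMap RCLike
open scoped InnerProductSpace

private lemma exists_good_inverse
    {H : Type*} [NormedAddCommGroup H] [InnerProductSpace ℂ H] [CompleteSpace H]
    (T : H →L[ℂ] H) (hT : T.IsPositive) {ε : ℝ} (hε : 0 < ε) :
    ∃ B : H →L[ℂ] H, (T + ε • 1) * B = 1 ∧ B * (T + ε • 1) = 1 ∧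
      ∀ u : H, ε * ‖B u‖ ≤ ‖u‖ := by
  set S : H →L[ℂ] H := T + ε • 1 with hS
  have hS_apply : ∀ u, S u = T u + ε • u := fun u => by simp [hS]
  have coercive : ∀ u : H, ε * ‖u‖ ^ 2 ≤ re ⟪S u, u⟫_ℂ := by
    intro u
    have h1 : 0 ≤ re ⟪T u, u⟫_ℂ := hT.2 u
    have h2 : re ⟪S u, u⟫_ℂ = re ⟪T u, u⟫_ℂ + ε * ‖u‖ ^ 2 := by
      rw [hS_apply, inner_add_left]
      have h3 : ⟪(ε : ℝ) • u, u⟫_ℂ = (ε : ℂ) * ⟪u, u⟫_ℂ := by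
        rw [RCLike.real_smul_eq_coe_smul (K := ℂ), inner_smul_left]
        simp
      rw [map_add, h3]
      have h4 : re ((ε : ℂ) * ⟪u, u⟫_ℂ) = ε * re ⟪u, u⟫_ℂ := by
        simp [RCLike.mul_re]
      rw [h4, inner_self_eq_norm_sq]
    linarith
  have lower : ∀ u : H, ε * ‖u‖ ≤ ‖S u‖ := by
    intro u
    rcases eq_or_ne u 0 with rfl | hu
    · simp
    · have h1 := coercive u
      have h2 : re ⟪S u, u⟫_ℂ ≤ ‖S u‖ * ‖u‖ := by
        calc re ⟪S u, u⟫_ℂ ≤ ‖(⟪S u, u⟫_ℂ : ℂ)‖ := RCLike.re_le_norm _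
          _ ≤ ‖S u‖ * ‖u‖ := norm_inner_le_norm _ _
      have hu' : 0 < ‖u‖ := norm_pos_iff.mpr hu
      nlinarith
  have hbound : ∀ u : H, ‖u‖ ≤ (⟨ε⁻¹, by positivity⟩ : NNReal) * ‖S u‖ := by
    intro u
    have := lower u
    have h' : ‖u‖ ≤ ε⁻¹ * ‖S u‖ := by
      calc ‖u‖ = ε⁻¹ * (ε * ‖u‖) := by field_simp
        _ ≤ ε⁻¹ * ‖S u‖ := mul_le_mul_of_nonneg_left this (by positivity)
    simpa using h'
  have antilip := S.antilipschitz_of_bound hbound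
  have hker : S.ker = ⊥ := by
    rw [Submodule.eq_bot_iff]
    intro u hu
    have h1 := lower u
    rw [LinearMap.mem_ker] at hu
    have hu' : S u = 0 := hu
    rw [hu', norm_zero] at h1
    have : ‖u‖ ≤ 0 := by nlinarith
    exact norm_le_zero_iff.mp this
  haveI : CompleteSpace S.range := antilip.completeSpace_range_clm
  have hrange : S.range = ⊤ := by
    rw [← Submodule.orthogonal_eq_bot_iff]
    rw [Submodule.eq_bot_iff]
    intro v hv
    have h0 : ⟪S v, v⟫_ℂ = 0 :=
      hv (S v) (LinearMap.mem_range_self _ v)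
    have h1 := coercive v
    rw [h0, map_zero] at h1
    have hv0 : ‖v‖ = 0 := by
      by_contra h
      have hp : 0 < ‖v‖ := lt_of_le_of_ne (norm_nonneg v) (Ne.symm h)
      have := mul_pos hε (pow_pos hp 2)
      linarith
    exact norm_eq_zero.mp hv0
  set E := ContinuousLinearEquiv.ofBijective S hker hrange with hE
  refine ⟨(E.symm : H →L[ℂ] H), ?_, ?_, ?_⟩
  · ext u
    simp only [ContinuousLinearMap.mul_apply, ContinuousLinearMap.coe_coe,
      ContinuousLinearMap.one_apply]
    exact ContinuousLinearEquiv.ofBijective_apply_symm_apply S hker hrange u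
  · ext u
    simp only [ContinuousLinearMap.mul_apply, ContinuousLinearMap.coe_coe,
      ContinuousLinearMap.one_apply]
    exact ContinuousLinearEquiv.ofBijective_symm_apply_apply S hker hrange u
  · intro u
    have h1 := lower (E.symm u)
    have h2 : S (E.symm u) = u :=
      ContinuousLinearEquiv.ofBijective_apply_symm_apply S hker hrange u
    rw [h2] at h1
    exact h1

/-- Lemma 6.8 (Hilbert space case): for a positive operator `T`,
`(T + n⁻¹ I)⁻¹ T x → P_{closure (range T)} x` for every `x`. -/
theorem tendsto_inverse_smoothing_to_projection
    {H : Type*} [NormedAddCommGroup H] [InnerProductSpace ℂ H] [CompleteSpace H]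
    (T : H →L[ℂ] H) (hT : T.IsPositive) (x : H) :
    Filter.Tendsto
      (fun n : ℕ => Ring.inverse (T + ((n : ℝ)⁻¹ : ℝ) • (1 : H →L[ℂ] H)) (T x))
      Filter.atTop
      (nhds (letI N := (LinearMap.range (T : H →ₗ[ℂ] H)).topologicalClosure
        haveI : CompleteSpace N :=
          (LinearMap.range (T : H →ₗ[ℂ] H)).isClosed_topologicalClosure.completeSpace_coe
        ((N.orthogonalProjectionOnto x : N) : H))) := by
  set K : Submodule ℂ H := LinearMap.range (T : H →ₗ[ℂ] H) with hK
  set N := K.topologicalClosure with hN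
  haveI : CompleteSpace N := K.isClosed_topologicalClosure.completeSpace_coe
  show Filter.Tendsto _ Filter.atTop (nhds ((N.orthogonalProjectionOnto x : N) : H))
  set p : H := ((N.orthogonalProjectionOnto x : N) : H) with hp
  -- `x - p ∈ Kᗮ`
  have hq : x - p ∈ Nᗮ := N.sub_starProjection_mem_orthogonal x
  have hq' : x - p ∈ Kᗮ := by
    rwa [hN, ← Submodule.orthogonal_orthogonal_eq_closure,
      Submodule.triorthogonal_eq_orthogonal] at hq
  -- `T x = T p`
  have hTq : T (x - p) = 0 := by
    apply ext_inner_right ℂ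
    intro v
    have h1 : ⟪T (x - p), v⟫_ℂ = ⟪x - p, T v⟫_ℂ := by
      conv_lhs => rw [← hT.isSelfAdjoint.adjoint_eq]
      exact ContinuousLinearMap.adjoint_inner_left T v (x - p)
    rw [h1, inner_zero_left]
    have hTv : T v ∈ K := LinearMap.mem_range_self _ v
    exact (Submodule.mem_orthogonal' K (x - p)).mp hq' (T v) hTv
  have hTx : T x = T p := by
    have := map_sub T x p
    rw [hTq] at this
    exact (sub_eq_zero.mp this.symm)
  have hpN : p ∈ N := SetLike.coe_mem _
  have hpcl : p ∈ closure (K : Set H) := by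
    rwa [← Submodule.topologicalClosure_coe]
  rw [Metric.tendsto_atTop]
  intro δ hδ
  obtain ⟨y, hyK, hy⟩ := Metric.mem_closure_iff.mp hpcl (δ / 2) (by positivity)
  obtain ⟨z, rfl⟩ := hyK
  obtain ⟨n₀, hn₀⟩ := exists_nat_gt ((2 * ‖z‖) / (δ / 2))
  refine ⟨max 1 n₀, fun n hn => ?_⟩
  have hn1 : 1 ≤ n := le_trans (le_max_left _ _) hn
  have hnn : (n₀ : ℝ) ≤ (n : ℝ) := by exact_mod_cast le_trans (le_max_right _ _) hn
  have hnpos : (0 : ℝ) < (n : ℝ) := by exact_mod_cast hn1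
  have hε : (0 : ℝ) < (n : ℝ)⁻¹ := inv_pos.mpr hnpos
  obtain ⟨B, hB1, hB2, hBnorm⟩ := exists_good_inverse T hT hε
  have hSinv : Ring.inverse (T + ((n : ℝ)⁻¹ : ℝ) • (1 : H →L[ℂ] H)) = B :=
    Ring.inverse_unit ⟨T + ((n : ℝ)⁻¹ : ℝ) • (1 : H →L[ℂ] H), B, hB1, hB2⟩
  set ε : ℝ := (n : ℝ)⁻¹ with hεdef
  have hBS : ∀ u : H, B ((T + ε • (1 : H →L[ℂ] H)) u) = u := by
    intro u
    have h := ContinuousLinearMap.ext_iff.mp hB2 u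
    rwa [ContinuousLinearMap.mul_apply, ContinuousLinearMap.one_apply] at h
  have hBT : ∀ u : H, B (T u) = u - ε • B u := by
    intro u
    have h := hBS u
    have h2 : (T + ε • (1 : H →L[ℂ] H)) u = T u + ε • u := by simp
    rw [h2, map_add, B.map_smul_of_tower] at h
    exact eq_sub_of_add_eq h
  simp only [hSinv, hTx]
  -- main estimate
  have key : dist (B (T p)) p = ε * ‖B p‖ := by
    rw [dist_eq_norm, hBT p]
    simp only [sub_sub_cancel_left, norm_neg, norm_smul, Real.norm_eq_abs,
      abs_of_pos hε]
  rw [key]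
  have split : ε * ‖B p‖ ≤ ε * ‖B (p - T z)‖ + ε * ‖B (T z)‖ := by
    have : B p = B (p - T z) + B (T z) := by rw [← map_add]; congr 1; abel
    rw [this]
    have := norm_add_le (B (p - T z)) (B (T z))
    nlinarith
  have e1 : ε * ‖B (p - T z)‖ ≤ ‖p - T z‖ := hBnorm _
  have e1' : ‖p - T z‖ < δ / 2 := by rwa [dist_eq_norm] at hy
  have e2 : ε * ‖B (T z)‖ ≤ ε * (2 * ‖z‖) := by
    rw [hBT z]
    have h3 : ‖z - ε • B z‖ ≤ ‖z‖ + ε * ‖B z‖ := by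
      calc ‖z - ε • B z‖ ≤ ‖z‖ + ‖ε • B z‖ := norm_sub_le _ _
        _ = ‖z‖ + ε * ‖B z‖ := by rw [norm_smul, Real.norm_eq_abs, abs_of_pos hε]
    have h4 : ε * ‖B z‖ ≤ ‖z‖ := hBnorm z
    nlinarith
  have e2' : ε * (2 * ‖z‖) < δ / 2 := by
    have hgt : (2 * ‖z‖) / (δ / 2) < (n : ℝ) := lt_of_lt_of_le hn₀ hnn
    have hδ2 : (0 : ℝ) < δ / 2 := by positivity
    rw [div_lt_iff₀ hδ2] at hgt
    rw [hεdef]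
    rw [inv_mul_lt_iff₀ hnpos]
    nlinarith
  linarith
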